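/- Let H be a maximal outerplanar graph on 2k vertices with Hamiltonian outer cycle a_1a_2···a_{2k}, and let G_H be obtained from H by adding k new vertices u_1,…,u_k with u_i adjacent exactly to a_{2i−1} and a_{2i}. Then γ×2(G_H) = 2k = 2|G_H|/3. -/

import Mathlib

open SimpleGraph

/-- `S` is a double dominating set of `G`: every vertex has at least two
vertices of its closed neighborhood in `S`. -/
def IsDoubleDomSet {V : Type*} [Fintype V] [DecidableEq V]
    (G : SimpleGraph V) [DecidableRel G.Adj] (S : Finset V) : Prop :=
  ∀ v : V, 2 ≤ (S ∩ insert v (G.neighborFinset v)).card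

/-- The double domination number `γ×2(G)`. -/
noncomputable def doubleDomNum {V : Type*} [Fintype V] [DecidableEq V]
    (G : SimpleGraph V) [DecidableRel G.Adj] : ℕ :=
  sInf {k | ∃ S : Finset V, IsDoubleDomSet G S ∧ S.card = k}

/-- `H` is a minor of `G`. -/
def HasMinor {V W : Type*} (G : SimpleGraph V) (H : SimpleGraph W) : Prop :=
  ∃ f : W → Set V,
    (∀ w, (f w).Nonempty) ∧
    (∀ w, (G.induce (f w)).Connected) ∧
    (Pairwise fun w₁ w₂ => Disjoint (f w₁) (f w₂)) ∧
    ∀ ⦃w₁ w₂⦄, H.Adj w₁ w₂ → ∃ a ∈ f w₁, ∃ b ∈ f w₂, G.Adj a b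

/-- A graph is outerplanar iff it has no `K₄` minor and no `K_{2,3}` minor. -/
def Outerplanar {V : Type*} (G : SimpleGraph V) : Prop :=
  ¬ HasMinor G (⊤ : SimpleGraph (Fin 4)) ∧
  ¬ HasMinor G (completeBipartiteGraph (Fin 2) (Fin 3))

/-- Maximal outerplanar: outerplanar, and adding any missing edge destroys
outerplanarity. -/
def MaximalOuterplanar {V : Type*} (G : SimpleGraph V) : Prop :=
  Outerplanar G ∧
  ∀ u v : V, u ≠ v → ¬ G.Adj u v →
    ¬ Outerplanar (G ⊔ SimpleGraph.fromEdgeSet {s(u, v)})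

/-- `T` is an internal triangle of `G`: a triangle none of whose edges lies
on any Hamiltonian cycle (for a maximal outerplanar graph on `≥ 4` vertices
the Hamiltonian cycle, i.e. the boundary of the outer face, is unique). -/
def IsInternalTriangle {V : Type*} [DecidableEq V] (G : SimpleGraph V) (T : Finset V) : Prop :=
  ∃ a b c : V, T = {a, b, c} ∧ a ≠ b ∧ a ≠ c ∧ b ≠ c ∧
    G.Adj a b ∧ G.Adj a c ∧ G.Adj b c ∧
    ∀ ⦃v : V⦄ (p : G.Walk v v), p.IsHamiltonianCycle →
      s(a, b) ∉ p.edges ∧ s(a, c) ∉ p.edges ∧ s(b, c) ∉ p.edges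

/-- `IsTwoTreeOn G s`: the induced subgraph of `G` on `s` is a 2-tree,
built from a triangle by repeatedly adding a vertex joined exactly to the
two endpoints of an existing edge. -/
inductive IsTwoTreeOn {V : Type*} [DecidableEq V] (G : SimpleGraph V) :
    Finset V → Prop
  | triangle {a b c : V} : a ≠ b → a ≠ c → b ≠ c →
      G.Adj a b → G.Adj a c → G.Adj b c → IsTwoTreeOn G {a, b, c}
  | grow {s : Finset V} {x y v : V} : IsTwoTreeOn G s → x ∈ s → y ∈ s →
      G.Adj x y → v ∉ s → (∀ u ∈ s, G.Adj v u ↔ u = x ∨ u = y) →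
      IsTwoTreeOn G (insert v s)

/-- `G` is a 2-tree (equivalently, a maximal `K₄`-minor-free graph). -/
def IsTwoTree {V : Type*} [Fintype V] [DecidableEq V] (G : SimpleGraph V) : Prop :=
  IsTwoTreeOn G Finset.univ

/-- The graph `G_H`: `H` together with `k` new vertices `u₀, …, u_{k-1}`,
where `u_j` is adjacent exactly to `a_{2j}` and `a_{2j+1}` (0-indexed). -/
def GH (k : ℕ) (H : SimpleGraph (Fin (2 * k))) :
    SimpleGraph (Fin (2 * k) ⊕ Fin k) :=
  SimpleGraph.fromRel fun x y =>
    match x, y with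
    | Sum.inl a, Sum.inl b => H.Adj a b
    | Sum.inl a, Sum.inr u => (a : ℕ) = 2 * (u : ℕ) ∨ (a : ℕ) = 2 * (u : ℕ) + 1
    | _, _ => False

/-- If `H` is maximal outerplanar on `2k` vertices with
Hamiltonian outer cycle `a₀a₁⋯a_{2k-1}` (consecutive vertices adjacent), then
`γ×2(G_H) = 2k = 2|G_H|/3`. -/
theorem doubleDomNum_GH (k : ℕ) (hk : 2 ≤ k) (H : SimpleGraph (Fin (2 * k)))
    [DecidableRel H.Adj] (hH : MaximalOuterplanar H)
    (houter : ∀ i : Fin (2 * k),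
      H.Adj i ⟨((i : ℕ) + 1) % (2 * k), Nat.mod_lt _ (by omega)⟩) :
    @doubleDomNum _ _ _ (GH k H) (Classical.decRel _) = 2 * k ∧
    2 * k = 2 * Fintype.card (Fin (2 * k) ⊕ Fin k) / 3 := by
  classical
  have hcard : Fintype.card (Fin (2 * k) ⊕ Fin k) = 3 * k := by
    simp only [Fintype.card_sum, Fintype.card_fin]; omega
  refine ⟨?_, by rw [hcard]; omega⟩
  letI inst : DecidableRel (GH k H).Adj := Classical.decRel _
  -- adjacency facts
  have adj_lr : ∀ (a : Fin (2 * k)) (u : Fin k),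
      (GH k H).Adj (Sum.inl a) (Sum.inr u) ↔ ((a : ℕ) = 2 * u ∨ (a : ℕ) = 2 * u + 1) := by
    intro a u
    simp only [GH, SimpleGraph.fromRel_adj]
    constructor
    · rintro ⟨-, h | h⟩
      · exact h
      · exact h.elim
    · intro h; exact ⟨by simp, Or.inl h⟩
  have adj_rr : ∀ (u v : Fin k), ¬ (GH k H).Adj (Sum.inr u) (Sum.inr v) := by
    intro u v h
    simp only [GH, SimpleGraph.fromRel_adj] at h
    rcases h with ⟨-, h | h⟩ <;> exact h
  have adj_ll : ∀ (a b : Fin (2 * k)), H.Adj a b → (GH k H).Adj (Sum.inl a) (Sum.inl b) := by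
    intro a b h
    simp only [GH, SimpleGraph.fromRel_adj]
    exact ⟨by simp [h.ne], Or.inl h⟩
  -- the 2k element double dominating set
  have hmem : (2 * k) ∈ {n | ∃ S : Finset (Fin (2 * k) ⊕ Fin k),
      IsDoubleDomSet (GH k H) S ∧ S.card = n} := by
    refine ⟨Finset.univ.image Sum.inl, ?_, ?_⟩
    · intro v
      have key : ∀ x y : Fin (2 * k) ⊕ Fin k, x ≠ y →
          x ∈ Finset.univ.image (Sum.inl (β := Fin k)) →
          y ∈ Finset.univ.image (Sum.inl (β := Fin k)) →
          x ∈ insert v ((GH k H).neighborFinset v) →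
          y ∈ insert v ((GH k H).neighborFinset v) →
          2 ≤ ((Finset.univ.image Sum.inl) ∩ insert v ((GH k H).neighborFinset v)).card := by
        intro x y hxy hx1 hy1 hx2 hy2
        have hsub : ({x, y} : Finset (Fin (2 * k) ⊕ Fin k)) ⊆
            (Finset.univ.image Sum.inl) ∩ insert v ((GH k H).neighborFinset v) := by
          intro z hz
          rcases Finset.mem_insert.mp hz with rfl | hz
          · exact Finset.mem_inter.mpr ⟨hx1, hx2⟩
          · rw [Finset.mem_singleton] at hz; subst hz
            exact Finset.mem_inter.mpr ⟨hy1, hy2⟩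
        calc 2 = ({x, y} : Finset (Fin (2 * k) ⊕ Fin k)).card := by
              rw [Finset.card_insert_of_notMem (by simpa using hxy), Finset.card_singleton]
          _ ≤ _ := Finset.card_le_card hsub
      match v with
      | Sum.inl a =>
        have hadj := houter a
        set a' : Fin (2 * k) := ⟨((a : ℕ) + 1) % (2 * k), Nat.mod_lt _ (by omega)⟩ with ha'
        refine key (Sum.inl a) (Sum.inl a') (by simp [hadj.ne]) (by simp) (by simp)
          (Finset.mem_insert_self _ _) ?_
        exact Finset.mem_insert_of_mem
          ((SimpleGraph.mem_neighborFinset _ _ _).mpr (adj_ll a a' hadj))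
      | Sum.inr u =>
        have h2u : 2 * (u : ℕ) < 2 * k := by omega
        have h2u1 : 2 * (u : ℕ) + 1 < 2 * k := by omega
        refine key (Sum.inl ⟨2 * u, h2u⟩) (Sum.inl ⟨2 * u + 1, h2u1⟩)
          (by simp [Fin.ext_iff]) (by simp) (by simp) ?_ ?_
        · exact Finset.mem_insert_of_mem ((SimpleGraph.mem_neighborFinset _ _ _).mpr
            ((adj_lr _ u).mpr (Or.inl rfl)).symm)
        · exact Finset.mem_insert_of_mem ((SimpleGraph.mem_neighborFinset _ _ _).mpr
            ((adj_lr _ u).mpr (Or.inr rfl)).symm)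
    · rw [Finset.card_image_of_injective _ Sum.inl_injective, Finset.card_univ,
        Fintype.card_fin]
  -- lower bound
  have hlb : ∀ n ∈ {n | ∃ S : Finset (Fin (2 * k) ⊕ Fin k),
      IsDoubleDomSet (GH k H) S ∧ S.card = n}, 2 * k ≤ n := by
    rintro n ⟨S, hS, rfl⟩
    set N : Fin k → Finset (Fin (2 * k) ⊕ Fin k) :=
      fun j => S ∩ insert (Sum.inr j) ((GH k H).neighborFinset (Sum.inr j)) with hN
    have hmemN : ∀ (j : Fin k) (x), x ∈ N j →
        x = Sum.inr j ∨ ∃ a : Fin (2 * k), x = Sum.inl a ∧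
          ((a : ℕ) = 2 * j ∨ (a : ℕ) = 2 * j + 1) := by
      intro j x hx
      rw [hN] at hx
      rcases Finset.mem_insert.mp (Finset.mem_inter.mp hx).2 with rfl | hx'
      · exact Or.inl rfl
      · rw [SimpleGraph.mem_neighborFinset] at hx'
        match x with
        | Sum.inr w => exact absurd hx' (adj_rr j w)
        | Sum.inl a => exact Or.inr ⟨a, rfl, (adj_lr a j).mp hx'.symm⟩
    have hdisj : ∀ j ∈ (Finset.univ : Finset (Fin k)), ∀ j' ∈ Finset.univ, j ≠ j' →
        Disjoint (N j) (N j') := by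
      intro j _ j' _ hjj'
      rw [Finset.disjoint_left]
      intro x hx hx'
      rcases hmemN j x hx with rfl | ⟨a, rfl, ha⟩
      · rcases hmemN j' _ hx' with h | ⟨a, h, -⟩
        · exact hjj' (Sum.inr.inj h)
        · exact nomatch h
      · rcases hmemN j' _ hx' with h | ⟨b, h, hb⟩
        · exact nomatch h
        · have : a = b := Sum.inl.inj h
          subst this
          have : (j : ℕ) = (j' : ℕ) := by omega
          exact hjj' (Fin.ext this)
    calc 2 * k = ∑ _j : Fin k, 2 := by simp [mul_comm]
      _ ≤ ∑ j : Fin k, (N j).card := Finset.sum_le_sum (fun j _ => hS (Sum.inr j))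
      _ = (Finset.univ.biUnion N).card := (Finset.card_biUnion hdisj).symm
      _ ≤ S.card := Finset.card_le_card (by
          intro x hx
          obtain ⟨j, -, hx⟩ := Finset.mem_biUnion.mp hx
          exact (Finset.mem_inter.mp hx).1)
  exact le_antisymm (Nat.sInf_le hmem) (le_csInf ⟨_, hmem⟩ hlb)
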